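/- Let a, b, q satisfy 0 < q < 1. The function x(t) = ∑_{n=0}^∞ (t^n / n!) c_n with c_0 = 1 and c_{n+1} = (a + b q^n) c_n defines an entire function satisfying x'(t) = a x(t) + b x(qt) for all t ∈ ℝ. -/

import Mathlib

theorem stmt_10 (a b q : ℝ) (hq0 : 0 < q) (hq1 : q < 1)
    (c : ℕ → ℝ) (hc0 : c 0 = 1) (hcrec : ∀ n : ℕ, c (n + 1) = (a + b * q ^ n) * c n)
    (x : ℝ → ℝ) (hx : ∀ t, x t = ∑' n : ℕ, t ^ n / n.factorial * c n) :
    ∀ t : ℝ, HasDerivAt x (a * x t + b * x (q * t)) t := by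
  have hxfun : x = fun t => ∑' n : ℕ, t ^ n / n.factorial * c n := funext hx
  set M : ℝ := |a| + |b| with hM
  have hM0 : 0 ≤ M := by positivity
  -- bound on coefficients
  have hcb : ∀ n, |c n| ≤ M ^ n := by
    intro n
    induction n with
    | zero => simp [hc0]
    | succ n ih =>
      rw [hcrec n, pow_succ, mul_comm (M ^ n) M]
      calc |(a + b * q ^ n) * c n| = |a + b * q ^ n| * |c n| := abs_mul _ _
        _ ≤ M * M ^ n := by
            apply mul_le_mul _ ih (abs_nonneg _) hM0
            calc |a + b * q ^ n| ≤ |a| + |b * q ^ n| := abs_add_le _ _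
              _ ≤ |a| + |b| := by
                  rw [abs_mul]
                  have hq' : |q ^ n| ≤ 1 := by
                    rw [abs_pow, abs_of_pos hq0]
                    exact pow_le_one₀ hq0.le hq1.le
                  nlinarith [abs_nonneg b, abs_nonneg (q ^ n)]
  -- summability of the series at any point
  have hsum : ∀ s : ℝ, Summable fun n : ℕ => s ^ n / n.factorial * c n := by
    intro s
    have hS : Summable fun n : ℕ => (|s| * M) ^ n / n.factorial :=
      Real.summable_pow_div_factorial _
    refine hS.of_norm_bounded fun n => ?_
    rw [Real.norm_eq_abs, abs_mul, abs_div, abs_pow, mul_pow]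
    have : |(n.factorial : ℝ)| = (n.factorial : ℝ) := abs_of_pos (by positivity)
    rw [this, div_mul_eq_mul_div, mul_div_assoc, mul_div_assoc]
    gcongr
    exact hcb n
  intro t
  set R : ℝ := |t| + 1 with hR
  have hR1 : 1 ≤ R := by simp only [hR]; linarith [abs_nonneg t]
  set g : ℕ → ℝ → ℝ := fun n y => y ^ n / n.factorial * c n with hg
  set g' : ℕ → ℝ → ℝ := fun n y => (n * y ^ (n - 1)) / n.factorial * c n with hg'
  set u : ℕ → ℝ := fun n => (n * R ^ (n - 1)) / n.factorial * M ^ n with hu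
  have hu_sum : Summable u := by
    rw [← summable_nat_add_iff 1]
    have : (fun n : ℕ => u (n + 1)) = fun n : ℕ => M * ((R * M) ^ n / n.factorial) := by
      funext n
      simp only [hu]
      rw [Nat.add_sub_cancel, Nat.factorial_succ, pow_succ, mul_pow]
      push_cast
      have h1 : ((n : ℝ) + 1) ≠ 0 := by positivity
      field_simp
    rw [this]
    exact (Real.summable_pow_div_factorial _).mul_left M
  have hderiv : ∀ n : ℕ, ∀ y : ℝ, HasDerivAt (g n) (g' n y) y := by
    intro n y
    have h1 : HasDerivAt (fun y : ℝ => y ^ n) ((n : ℝ) * y ^ (n - 1)) y := hasDerivAt_pow n y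
    have h2 := (h1.div_const (n.factorial : ℝ)).mul_const (c n)
    convert h2 using 1
  have hbound : ∀ n : ℕ, ∀ y ∈ Metric.ball (0 : ℝ) R, ‖g' n y‖ ≤ u n := by
    intro n y hy
    have hyR : |y| ≤ R := by
      rw [Metric.mem_ball, Real.dist_eq, sub_zero] at hy
      exact hy.le
    simp only [hg', hu, Real.norm_eq_abs]
    rw [abs_mul, abs_div, abs_mul, abs_pow]
    have h1 : |(n.factorial : ℝ)| = (n.factorial : ℝ) := abs_of_pos (by positivity)
    have h2 : |(n : ℝ)| = (n : ℝ) := abs_of_nonneg (by positivity)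
    rw [h1, h2]
    gcongr
    all_goals first | exact hyR | exact hcb n | exact abs_nonneg y | positivity
  have hsum0 : Summable fun n => g n (0 : ℝ) := hsum 0
  have key : HasDerivAt (fun z => ∑' n, g n z) (∑' n, g' n t) t := by
    apply hasDerivAt_tsum_of_isPreconnected hu_sum Metric.isOpen_ball
      (convex_ball (0:ℝ) R).isPreconnected (fun n y _ => hderiv n y) hbound
      (Metric.mem_ball_self (by positivity)) hsum0
    rw [Metric.mem_ball, Real.dist_eq, sub_zero]
    simp only [hR]
    linarith [abs_nonneg t]
  -- summability of the derivative series
  have hg'_sum : Summable fun n => g' n t :=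
    Summable.of_norm_bounded hu_sum fun n =>
      hbound n t (by rw [Metric.mem_ball, Real.dist_eq, sub_zero]; linarith [abs_nonneg t])
  -- now compute the sum of derivatives
  have hshift : (∑' n, g' n t) = ∑' n : ℕ, t ^ n / n.factorial * c (n + 1) := by
    rw [Summable.tsum_eq_zero_add hg'_sum]
    have h0 : g' 0 t = 0 := by simp [hg']
    rw [h0, zero_add]
    congr 1
    funext n
    simp only [hg']
    rw [Nat.add_sub_cancel, Nat.factorial_succ]
    push_cast
    have h1 : ((n : ℝ) + 1) ≠ 0 := by positivity
    have h2 : (n.factorial : ℝ) ≠ 0 := by positivity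
    field_simp
  have hsplit : (∑' n : ℕ, t ^ n / n.factorial * c (n + 1))
      = a * x t + b * x (q * t) := by
    have e1 : ∀ n : ℕ, t ^ n / n.factorial * c (n + 1)
        = a * (t ^ n / n.factorial * c n) + b * ((q * t) ^ n / n.factorial * c n) := by
      intro n
      rw [hcrec n, mul_pow]
      ring
    rw [tsum_congr e1]
    rw [Summable.tsum_add ((hsum t).mul_left a) ((hsum (q * t)).mul_left b)]
    rw [tsum_mul_left, tsum_mul_left, hx t, hx (q * t)]
  rw [hxfun]
  rw [show a * ((fun t => ∑' n : ℕ, t ^ n / n.factorial * c n) t)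
      + b * ((fun t => ∑' n : ℕ, t ^ n / n.factorial * c n) (q * t))
      = ∑' n, g' n t by rw [hshift, hsplit, hxfun]]
  exact key
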